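/- (Lemma 2 of Appendix B, correlation-time expansion) Fix real numbers a11, a12, a21, a22, σx, σy with a22 ≠ 0 and ã ≠ 0. Let ε₀ > 0 and let c11, c12, c22 : (0, ε₀) → ℝ be such that for each ε ∈ (0, ε₀), (c11(ε), c12(ε), c22(ε)) solves the two-scale Lyapunov system, with c11 and c12 bounded on (0, ε₀) and c11(ε) ≥ c₀ for some constant c₀ > 0. Define the correlation time Tc(ε) := (1/c11(ε)) * (−c11(ε)/ã + ε*c12(ε)*a12/(a22*ã)). Then Tc(ε) = −1/(ã*(1 − ε*â)) + O(ε²) as ε → 0⁺. -/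

import Mathlib

set_option maxHeartbeats 1000000


/-- `f = O(ε²)` as `ε → 0⁺`, with the bound holding inside `(0, ε₀)`. -/
def IsO2 (ε₀ : ℝ) (f : ℝ → ℝ) : Prop :=
  ∃ C ε₁ : ℝ, 0 < C ∧ 0 < ε₁ ∧ ε₁ ≤ ε₀ ∧ ∀ ε, 0 < ε → ε < ε₁ → |f ε| ≤ C * ε ^ 2

/-- The two-scale Lyapunov system. -/
def SolvesLyapunov (a11 a12 a21 a22 σx σy ε c11 c12 c22 : ℝ) : Prop :=
  0 = σx ^ 2 + 2 * a11 * c11 + 2 * a12 * c12 ∧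
  0 = a11 * c12 + a12 * c22 + c11 * a21 / ε + c12 * a22 / ε ∧
  0 = σy ^ 2 / ε + 2 * c12 * a21 / ε + 2 * c22 * a22 / ε

/-- Lemma 2 of Appendix B: the correlation time satisfies
`Tc(ε) = −1/(ã(1 − εâ)) + O(ε²)` as `ε → 0⁺`. -/
theorem stmt7 (a11 a12 a21 a22 σx σy : ℝ) (ha22 : a22 ≠ 0)
    (hat : a11 - a12 * a21 / a22 ≠ 0)
    (ε₀ : ℝ) (hε₀ : 0 < ε₀) (c11 c12 c22 : ℝ → ℝ)
    (hsol : ∀ ε, 0 < ε → ε < ε₀ →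
      SolvesLyapunov a11 a12 a21 a22 σx σy ε (c11 ε) (c12 ε) (c22 ε))
    (hbdd : ∃ M : ℝ, ∀ ε, 0 < ε → ε < ε₀ → |c11 ε| ≤ M ∧ |c12 ε| ≤ M)
    (c₀ : ℝ) (hc₀ : 0 < c₀) (hc11 : ∀ ε, 0 < ε → ε < ε₀ → c₀ ≤ c11 ε) :
    IsO2 ε₀ (fun ε =>
      (1 / c11 ε) *
          (-(c11 ε) / (a11 - a12 * a21 / a22)
            + ε * c12 ε * a12 / (a22 * (a11 - a12 * a21 / a22)))
        + 1 / ((a11 - a12 * a21 / a22) * (1 - ε * (a12 * a21 / a22 ^ 2)))) := by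
  obtain ⟨M, hM⟩ := hbdd
  have hM0 : 0 ≤ M := le_trans (abs_nonneg _) (hM (ε₀/2) (by positivity) (by linarith)).1
  have hta : 0 < |a11 - a12 * a21 / a22| := abs_pos.mpr hat
  set ha : ℝ := a12 * a21 / a22 ^ 2 with hha
  set Mc : ℝ := (σy ^ 2 + 2 * M * |a21|) / (2 * |a22|) with hMcdef
  have hMc0 : 0 ≤ Mc := by positivity
  set MD : ℝ := |a11| * M + |a12| * Mc with hMDdef
  have hMD0 : 0 ≤ MD := by positivity
  set C : ℝ := 2 * ha ^ 2 / |a11 - a12 * a21 / a22|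
      + |a12| * MD / (a22 ^ 2 * |a11 - a12 * a21 / a22| * c₀) + 1 with hCdef
  have hC1 : 0 ≤ 2 * ha ^ 2 / |a11 - a12 * a21 / a22| := by positivity
  have hC2 : 0 ≤ |a12| * MD / (a22 ^ 2 * |a11 - a12 * a21 / a22| * c₀) :=
    div_nonneg (by positivity) (mul_nonneg (by positivity) hc₀.le)
  refine ⟨C, min ε₀ (1 / (2 * (|ha| + 1))), by rw [hCdef]; linarith,
    lt_min hε₀ (by positivity), min_le_left _ _, ?_⟩
  intro ε hε hεlt
  have hεε₀ : ε < ε₀ := lt_of_lt_of_le hεlt (min_le_left _ _)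
  obtain ⟨h1, h2, h3⟩ := hsol ε hε hεε₀
  have hc : c₀ ≤ c11 ε := hc11 ε hε hεε₀
  have hc11pos : 0 < c11 ε := lt_of_lt_of_le hc₀ hc
  have hcne : c11 ε ≠ 0 := ne_of_gt hc11pos
  obtain ⟨hb1, hb2⟩ := hM ε hε hεε₀
  have hεne : ε ≠ 0 := ne_of_gt hε
  have h3' : σy ^ 2 + 2 * c12 ε * a21 + 2 * c22 ε * a22 = 0 := by
    field_simp at h3; linarith
  have h2' : ε * (a11 * c12 ε + a12 * c22 ε) + c11 ε * a21 + c12 ε * a22 = 0 := by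
    field_simp at h2; linarith
  have hc22 : |c22 ε| ≤ Mc := by
    have he : c22 ε = -(σy ^ 2 + 2 * c12 ε * a21) / (2 * a22) := by
      field_simp; linarith
    rw [he, abs_div, abs_neg, abs_mul, abs_two, hMcdef]
    gcongr
    calc |σy ^ 2 + 2 * c12 ε * a21| ≤ |σy ^ 2| + |2 * c12 ε * a21| := abs_add_le _ _
      _ = σy ^ 2 + 2 * |c12 ε| * |a21| := by
          rw [abs_of_nonneg (sq_nonneg σy), abs_mul, abs_mul, abs_two]
      _ ≤ σy ^ 2 + 2 * M * |a21| := by gcongr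
  set D : ℝ := a11 * c12 ε + a12 * c22 ε with hDdef
  have hD : |D| ≤ MD := by
    rw [hDdef, hMDdef]
    calc |a11 * c12 ε + a12 * c22 ε| ≤ |a11 * c12 ε| + |a12 * c22 ε| := abs_add_le _ _
      _ ≤ |a11| * M + |a12| * Mc := by rw [abs_mul, abs_mul]; gcongr
  have hεha : |ε * ha| < 1 / 2 := by
    have hlt : ε < 1 / (2 * (|ha| + 1)) := lt_of_lt_of_le hεlt (min_le_right _ _)
    have hpos1 : (0:ℝ) < |ha| + 1 := by positivity
    rw [abs_mul, abs_of_pos hε]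
    calc ε * |ha| ≤ ε * (|ha| + 1) := by nlinarith [abs_nonneg ha]
      _ < (1 / (2 * (|ha| + 1))) * (|ha| + 1) := by nlinarith
      _ = 1 / 2 := by field_simp
  have hhalf : 1 / 2 ≤ 1 - ε * ha := by
    have := abs_lt.mp hεha
    linarith [this.2]
  have h1mε : 1 / 2 ≤ |1 - ε * ha| := hhalf.trans (le_abs_self _)
  have hne : (1 : ℝ) - ε * ha ≠ 0 := ne_of_gt (by linarith)
  have hc12 : c12 ε = (-(c11 ε) * a21 - ε * D) / a22 := by
    field_simp; linarith
  have hid : (1 / c11 ε) *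
          (-(c11 ε) / (a11 - a12 * a21 / a22)
            + ε * c12 ε * a12 / (a22 * (a11 - a12 * a21 / a22)))
        + 1 / ((a11 - a12 * a21 / a22) * (1 - ε * ha))
      = ε ^ 2 * (ha ^ 2 / ((a11 - a12 * a21 / a22) * (1 - ε * ha))
          - a12 * D / (a22 ^ 2 * (a11 - a12 * a21 / a22) * c11 ε)) := by
    have h5 : a11 * a22 - a12 * a21 ≠ 0 := by
      intro h; apply hat; field_simp; linarith
    have h6 : a22 ^ 2 - ε * (a12 * a21) ≠ 0 := by
      intro h; apply hne; rw [hha]; field_simp; linarith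
    rw [hc12, hha]
    field_simp
    have h6' : a22 ^ 2 - a12 * ε * a21 ≠ 0 := by
      intro h; apply h6; linarith
    field_simp
    ring
  show |(1 / c11 ε) *
          (-(c11 ε) / (a11 - a12 * a21 / a22)
            + ε * c12 ε * a12 / (a22 * (a11 - a12 * a21 / a22)))
        + 1 / ((a11 - a12 * a21 / a22) * (1 - ε * ha))| ≤ C * ε ^ 2
  rw [hid, abs_mul, abs_pow, abs_of_pos hε, mul_comm C (ε ^ 2)]
  gcongr
  have hT1 : |ha ^ 2 / ((a11 - a12 * a21 / a22) * (1 - ε * ha))|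
      ≤ 2 * ha ^ 2 / |a11 - a12 * a21 / a22| := by
    rw [abs_div, abs_mul, abs_of_nonneg (sq_nonneg ha)]
    calc ha ^ 2 / (|a11 - a12 * a21 / a22| * |1 - ε * ha|)
        ≤ ha ^ 2 / (|a11 - a12 * a21 / a22| * (1 / 2)) := by
          gcongr
      _ = 2 * ha ^ 2 / |a11 - a12 * a21 / a22| := by
          rw [mul_one_div, div_div_eq_mul_div]
          ring_nf
  have hT2 : |a12 * D / (a22 ^ 2 * (a11 - a12 * a21 / a22) * c11 ε)|
      ≤ |a12| * MD / (a22 ^ 2 * |a11 - a12 * a21 / a22| * c₀) := by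
    rw [abs_div, abs_mul, abs_mul, abs_mul, abs_pow, sq_abs, abs_of_pos hc11pos]
    exact div_le_div₀ (by positivity) (by gcongr) (by positivity) (by gcongr)
  calc |ha ^ 2 / ((a11 - a12 * a21 / a22) * (1 - ε * ha))
          - a12 * D / (a22 ^ 2 * (a11 - a12 * a21 / a22) * c11 ε)|
      ≤ |ha ^ 2 / ((a11 - a12 * a21 / a22) * (1 - ε * ha))|
        + |a12 * D / (a22 ^ 2 * (a11 - a12 * a21 / a22) * c11 ε)| := abs_sub _ _
    _ ≤ C := by rw [hCdef]; linarith
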